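/- Filtered backprojection formula for convolutions: let f and η be Schwartz functions on ℝ². For θ ∈ ℝ define R_θ f(t) = ∫_ℝ f(t·u_θ + s·v_θ) ds. Then for every x ∈ ℝ², (f ⋆ η)(x) = ∫₀^{π} ∫_ℝ (R_θ f)^(t) · |t| · η̂(t·u_θ) · e^{2πi t ⟨x, u_θ⟩} dt dθ, where ⋆ denotes convolution on ℝ², (R_θ f)^ is the one-dimensional Fourier transform of R_θ f, and η̂ is the two-dimensional Fourier transform of η. -/

import Mathlib

open MeasureTheory Real RealInnerProductSpace

/-- The unit vector u_θ = (cos θ, sin θ) in ℝ². -/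
noncomputable def uVec (θ : ℝ) : EuclideanSpace ℝ (Fin 2) :=
  (WithLp.equiv 2 (Fin 2 → ℝ)).symm ![Real.cos θ, Real.sin θ]

/-- The unit vector v_θ = u_{θ+π/2} = (−sin θ, cos θ) in ℝ². -/
noncomputable def vVec (θ : ℝ) : EuclideanSpace ℝ (Fin 2) :=
  (WithLp.equiv 2 (Fin 2 → ℝ)).symm ![-Real.sin θ, Real.cos θ]

/-- The radialization η²(x) = (1/(2π)) ∫₀^{2π} η(⟨x,u_θ⟩) η(⟨x,v_θ⟩) dθ. -/
noncomputable def radialization (η : ℝ → ℝ) (x : EuclideanSpace ℝ (Fin 2)) : ℝ :=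
  (1 / (2 * π)) * ∫ θ in (0:ℝ)..(2 * π), η ⟪x, uVec θ⟫ * η ⟪x, vVec θ⟫

open FourierTransform

/-- The Radon projection R_θ f(t) = ∫ f(t u_θ + s v_θ) ds. -/
noncomputable def radon (f : EuclideanSpace ℝ (Fin 2) → ℂ) (θ : ℝ) (t : ℝ) : ℂ :=
  ∫ s : ℝ, f (t • uVec θ + s • vVec θ)

/-- Convolution on ℝ² of complex-valued functions: (f ⋆ η)(x) = ∫ f(y) η(x − y) dy. -/
noncomputable def conv2c (f η : EuclideanSpace ℝ (Fin 2) → ℂ)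
    (x : EuclideanSpace ℝ (Fin 2)) : ℂ :=
  ∫ y : EuclideanSpace ℝ (Fin 2), f y * η (x - y)

namespace FBP

lemma inner_uu (θ : ℝ) : ⟪uVec θ, uVec θ⟫ = (1:ℝ) := by
  simp [-inner_self_eq_norm_sq_to_K, uVec, PiLp.inner_apply, WithLp.equiv_symm_apply, PiLp.toLp_apply, Fin.sum_univ_two,
    RCLike.inner_apply, conj_trivial]
  nlinarith [Real.sin_sq_add_cos_sq θ]

lemma inner_vv (θ : ℝ) : ⟪vVec θ, vVec θ⟫ = (1:ℝ) := by
  simp [-inner_self_eq_norm_sq_to_K, vVec, PiLp.inner_apply, WithLp.equiv_symm_apply, PiLp.toLp_apply, Fin.sum_univ_two,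
    RCLike.inner_apply, conj_trivial]
  nlinarith [Real.sin_sq_add_cos_sq θ]

lemma inner_uv (θ : ℝ) : ⟪uVec θ, vVec θ⟫ = (0:ℝ) := by
  simp [uVec, vVec, PiLp.inner_apply, WithLp.equiv_symm_apply, PiLp.toLp_apply, Fin.sum_univ_two,
    RCLike.inner_apply, conj_trivial]
  ring

lemma norm_uVec (θ : ℝ) : ‖uVec θ‖ = 1 := by
  have := inner_uu θ
  have h : ‖uVec θ‖ ^ 2 = 1 := by
    rw [← real_inner_self_eq_norm_sq, this]
  nlinarith [norm_nonneg (uVec θ)]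

lemma uVec_sub_pi (θ : ℝ) : uVec (θ - π) = -uVec θ := by
  ext i
  fin_cases i <;>
    simp [uVec, WithLp.equiv_symm_apply, PiLp.toLp_apply, Real.cos_sub_pi, Real.sin_sub_pi]

end FBP

namespace FBP

noncomputable def rotL (θ : ℝ) : EuclideanSpace ℝ (Fin 2) →ₗ[ℝ] EuclideanSpace ℝ (Fin 2) where
  toFun x := x 0 • uVec θ + x 1 • vVec θ
  map_add' x y := by
    show (x + y) 0 • uVec θ + (x + y) 1 • vVec θ = _
    simp only [PiLp.add_apply, add_smul]
    abel
  map_smul' c x := by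
    show (c • x) 0 • uVec θ + (c • x) 1 • vVec θ = _
    simp only [PiLp.smul_apply, smul_eq_mul, RingHom.id_apply, smul_add, smul_smul]

lemma rotL_inner (θ : ℝ) (x y : EuclideanSpace ℝ (Fin 2)) :
    ⟪rotL θ x, rotL θ y⟫ = ⟪x, y⟫ := by
  have h1 := inner_uu θ; have h2 := inner_vv θ; have h3 := inner_uv θ
  have h4 : ⟪vVec θ, uVec θ⟫ = (0:ℝ) := by rw [real_inner_comm]; exact h3
  show ⟪x 0 • uVec θ + x 1 • vVec θ, y 0 • uVec θ + y 1 • vVec θ⟫ = (⟪x, y⟫ : ℝ)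
  rw [inner_add_left, inner_add_right, inner_add_right]
  simp only [real_inner_smul_left, real_inner_smul_right, h1, h2, h3, h4]
  rw [PiLp.inner_apply]
  simp [Fin.sum_univ_two, RCLike.inner_apply, conj_trivial]

noncomputable def rot (θ : ℝ) : EuclideanSpace ℝ (Fin 2) ≃ₗᵢ[ℝ] EuclideanSpace ℝ (Fin 2) :=
  ((rotL θ).isometryOfInner (rotL_inner θ)).toLinearIsometryEquiv rfl

lemma rot_apply (θ : ℝ) (x : EuclideanSpace ℝ (Fin 2)) :
    rot θ x = x 0 • uVec θ + x 1 • vVec θ := rfl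

noncomputable def toE : (ℝ × ℝ) ≃ᵐ EuclideanSpace ℝ (Fin 2) :=
  (MeasurableEquiv.finTwoArrow (α := ℝ)).symm.trans (MeasurableEquiv.toLp 2 (Fin 2 → ℝ))

lemma mp_toE : MeasurePreserving toE volume volume :=
  ((EuclideanSpace.volume_preserving_symm_measurableEquiv_toLp (Fin 2)).symm).comp
    ((volume_preserving_finTwoArrow ℝ).symm)

noncomputable def M (θ : ℝ) : (ℝ × ℝ) ≃ᵐ EuclideanSpace ℝ (Fin 2) :=
  toE.trans (rot θ).toHomeomorph.toMeasurableEquiv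

lemma mp_M (θ : ℝ) : MeasurePreserving (M θ) volume volume :=
  ((rot θ).measurePreserving).comp mp_toE

lemma toE_apply (p : ℝ × ℝ) : toE p = (WithLp.equiv 2 (Fin 2 → ℝ)).symm ![p.1, p.2] := by
  ext i
  fin_cases i <;> rfl

lemma M_apply (θ : ℝ) (p : ℝ × ℝ) : M θ p = p.1 • uVec θ + p.2 • vVec θ := by
  show rot θ (toE p) = _
  rw [toE_apply, rot_apply]
  congr 1

lemma M_polar (θ r : ℝ) :
    M 0 (r * Real.cos θ, r * Real.sin θ) = r • uVec θ := by
  rw [M_apply]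
  ext i
  fin_cases i <;>
    simp [uVec, vVec, PiLp.add_apply, PiLp.smul_apply, WithLp.equiv_symm_apply, PiLp.toLp_apply,
      smul_eq_mul]

end FBP

namespace FBP

lemma continuous_M (θ : ℝ) : Continuous (M θ) := by
  have : (M θ : ℝ × ℝ → EuclideanSpace ℝ (Fin 2)) =
      fun p => p.1 • uVec θ + p.2 • vVec θ := funext (M_apply θ)
  rw [this]; fun_prop

lemma slice (f : SchwartzMap (EuclideanSpace ℝ (Fin 2)) ℂ) (θ t : ℝ) :
    𝓕 (radon (fun y => f y) θ) t = 𝓕 (fun y => f y) (t • uVec θ) := by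
  have hMint : Integrable (fun p : ℝ × ℝ => f (M θ p)) volume :=
    ((mp_M θ).integrable_comp f.continuous.aestronglyMeasurable).mpr f.integrable
  have hint : Integrable (fun p : ℝ × ℝ =>
      Complex.exp (↑(-2 * π * (p.1 * t)) * Complex.I) • f (M θ p)) volume := by
    refine hMint.norm.mono' ?_ (Filter.Eventually.of_forall fun p => ?_)
    · exact (Continuous.aestronglyMeasurable (by
        exact ((Complex.continuous_exp.comp (by fun_prop)).smul
          (f.continuous.comp (continuous_M θ)))))
    · rw [norm_smul, Complex.norm_exp_ofReal_mul_I, one_mul]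
  calc 𝓕 (radon (fun y => f y) θ) t
      = ∫ t' : ℝ, Complex.exp (↑(-2 * π * ⟪t', t⟫) * Complex.I) • radon (fun y => f y) θ t' :=
        Real.fourier_eq' _ _
    _ = ∫ t' : ℝ, ∫ s : ℝ, Complex.exp (↑(-2 * π * (t' * t)) * Complex.I) •
          f (M θ (t', s)) := by
        refine integral_congr_ae (Filter.Eventually.of_forall fun t' => ?_)
        beta_reduce
        have h1 : ⟪t', t⟫ = t' * t := by
          simp [RCLike.inner_apply, conj_trivial]
          ring
        rw [h1, radon, ← integral_smul]
        refine integral_congr_ae (Filter.Eventually.of_forall fun s => ?_)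
        beta_reduce
        rw [M_apply]
    _ = ∫ p : ℝ × ℝ, Complex.exp (↑(-2 * π * (p.1 * t)) * Complex.I) • f (M θ p) := by
      rw [Measure.volume_eq_prod ℝ ℝ] at hint ⊢
      exact MeasureTheory.integral_integral hint
    _ = ∫ p : ℝ × ℝ, Complex.exp (↑(-2 * π * ⟪M θ p, t • uVec θ⟫) * Complex.I) • f (M θ p) := by
        refine integral_congr_ae (Filter.Eventually.of_forall fun p => ?_)
        beta_reduce
        have h4 : ⟪vVec θ, uVec θ⟫ = (0:ℝ) := by rw [real_inner_comm]; exact inner_uv θ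
        have h2 : ⟪M θ p, t • uVec θ⟫ = p.1 * t := by
          rw [M_apply, inner_add_left, real_inner_smul_right, real_inner_smul_right,
            real_inner_smul_left, real_inner_smul_left, inner_uu θ, h4]
          ring
        rw [h2]
    _ = ∫ y : EuclideanSpace ℝ (Fin 2),
          Complex.exp (↑(-2 * π * ⟪y, t • uVec θ⟫) * Complex.I) • f y :=
        (mp_M θ).integral_comp (M θ).measurableEmbedding
          (fun y => Complex.exp (↑(-2 * π * ⟪y, t • uVec θ⟫) * Complex.I) • f y)
    _ = 𝓕 (fun y => f y) (t • uVec θ) := (Real.fourier_eq' _ _).symm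

end FBP

namespace FBP

lemma convA (f η : SchwartzMap (EuclideanSpace ℝ (Fin 2)) ℂ) (x : EuclideanSpace ℝ (Fin 2)) :
    conv2c (fun y => f y) (fun y => η y) x =
      ∫ ω : EuclideanSpace ℝ (Fin 2), 𝓕 (fun y => f y) ω * 𝓕 (fun y => η y) ω *
        Complex.exp (↑(2 * π * ⟪x, ω⟫) * Complex.I) := by
  have h𝓕int : Integrable (𝓕 (fun y => η y)) volume := by
    have := (SchwartzMap.fourierTransformCLM ℂ η).integrable (μ := volume)
    rwa [SchwartzMap.fourierTransformCLM_apply] at this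
  have h𝓕cont : Continuous (𝓕 (fun y => η y)) := by
    have := (SchwartzMap.fourierTransformCLM ℂ η).continuous
    rwa [SchwartzMap.fourierTransformCLM_apply] at this
  have hηinv : ∀ z : EuclideanSpace ℝ (Fin 2), (η z : ℂ) =
      ∫ ω, Complex.exp (↑(2 * π * ⟪ω, z⟫) * Complex.I) • 𝓕 (fun y => η y) ω := by
    intro z
    have h := Continuous.fourierInv_fourier_eq η.continuous η.integrable h𝓕int
    conv_lhs => rw [show (η z : ℂ) = 𝓕⁻ (𝓕 (fun y => η y)) z from by rw [h]]
    rw [Real.fourierInv_eq']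
  have hprod : Integrable (fun q : (EuclideanSpace ℝ (Fin 2)) × (EuclideanSpace ℝ (Fin 2)) =>
      f q.1 * (Complex.exp (↑(2 * π * ⟪q.2, x - q.1⟫) * Complex.I) *
        𝓕 (fun y => η y) q.2)) (volume.prod volume) := by
    have hbase : Integrable (fun q : (EuclideanSpace ℝ (Fin 2)) × (EuclideanSpace ℝ (Fin 2)) =>
        ‖f q.1‖ * ‖𝓕 (fun y => η y) q.2‖) (volume.prod volume) :=
      (f.integrable.norm).mul_prod h𝓕int.norm
    refine hbase.mono' ?_ (Filter.Eventually.of_forall fun q => ?_)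
    · refine Continuous.aestronglyMeasurable ?_
      refine (f.continuous.comp continuous_fst).mul ?_
      refine Continuous.mul ?_ (h𝓕cont.comp continuous_snd)
      refine Complex.continuous_exp.comp ?_
      refine Continuous.mul ?_ continuous_const
      refine Complex.continuous_ofReal.comp ?_
      exact continuous_const.mul (continuous_snd.inner (continuous_const.sub continuous_fst))
    · rw [norm_mul, norm_mul, Complex.norm_exp_ofReal_mul_I, one_mul]
  calc conv2c (fun y => f y) (fun y => η y) x
      = ∫ y, (f y : ℂ) * η (x - y) := rfl
    _ = ∫ y, ∫ ω, f y * (Complex.exp (↑(2 * π * ⟪ω, x - y⟫) * Complex.I) *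
          𝓕 (fun y => η y) ω) := by
        refine integral_congr_ae (Filter.Eventually.of_forall fun y => ?_)
        beta_reduce
        rw [hηinv (x - y), ← integral_const_mul]
        refine integral_congr_ae (Filter.Eventually.of_forall fun ω => ?_)
        beta_reduce
        rw [smul_eq_mul]
    _ = ∫ ω, ∫ y, f y * (Complex.exp (↑(2 * π * ⟪ω, x - y⟫) * Complex.I) *
          𝓕 (fun y => η y) ω) := integral_integral_swap hprod
    _ = ∫ ω : EuclideanSpace ℝ (Fin 2), 𝓕 (fun y => f y) ω * 𝓕 (fun y => η y) ω *
        Complex.exp (↑(2 * π * ⟪x, ω⟫) * Complex.I) := by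
        refine integral_congr_ae (Filter.Eventually.of_forall fun ω => ?_)
        beta_reduce
        have hsplit : ∀ y : EuclideanSpace ℝ (Fin 2),
            Complex.exp (↑(2 * π * ⟪ω, x - y⟫) * Complex.I) =
            Complex.exp (↑(-2 * π * ⟪y, ω⟫) * Complex.I) *
              Complex.exp (↑(2 * π * ⟪x, ω⟫) * Complex.I) := by
          intro y
          rw [← Complex.exp_add]
          congr 1
          have : ⟪ω, x - y⟫ = ⟪x, ω⟫ - ⟪y, ω⟫ := by
            rw [inner_sub_right, real_inner_comm ω x, real_inner_comm ω y]
          rw [this]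
          push_cast
          ring
        have : (fun y : EuclideanSpace ℝ (Fin 2) => (f y : ℂ) *
            (Complex.exp (↑(2 * π * ⟪ω, x - y⟫) * Complex.I) * 𝓕 (fun y => η y) ω)) =
            fun y => (Complex.exp (↑(-2 * π * ⟪y, ω⟫) * Complex.I) • (f y : ℂ)) *
              (𝓕 (fun y => η y) ω * Complex.exp (↑(2 * π * ⟪x, ω⟫) * Complex.I)) := by
          funext y
          rw [hsplit y, smul_eq_mul]
          ring
        rw [this, integral_mul_const, ← Real.fourier_eq']
        ring
end FBP

namespace FBP

lemma norm_smul_uVec (t θ : ℝ) : ‖t • uVec θ‖ = |t| := by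
  rw [norm_smul, norm_uVec, mul_one, Real.norm_eq_abs]

lemma continuous_uVec : Continuous uVec := by
  have h1 : ∀ θ : ℝ, uVec θ = M 0 (Real.cos θ, Real.sin θ) := by
    intro θ
    have := M_polar θ 1
    simp only [one_mul, one_smul] at this
    exact this.symm
  have : (uVec : ℝ → EuclideanSpace ℝ (Fin 2)) =
      fun θ => M 0 (Real.cos θ, Real.sin θ) := funext h1
  rw [this]
  exact (continuous_M 0).comp (Real.continuous_cos.prodMk Real.continuous_sin)

lemma polar_decomp (g : EuclideanSpace ℝ (Fin 2) → ℂ) (hg : Continuous g) {C : ℝ}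
    (hC : ∀ ω, ‖g ω‖ ≤ C * (1 + ‖ω‖) ^ (-(3:ℝ))) :
    ∫ ω, g ω = ∫ θ in (0:ℝ)..π, ∫ t : ℝ, (|t| : ℝ) • g (t • uVec θ) := by
  set ψ : ℝ → ℝ := fun t => C * (1 + |t|) ^ (-(2:ℝ)) with hψdef
  have hψ : Integrable ψ := by
    have h := integrable_one_add_norm (E := ℝ) (μ := volume) (r := 2) (by norm_num)
    have h2 := h.const_mul C
    refine h2.congr (Filter.Eventually.of_forall fun t => ?_)
    show C * (1 + ‖t‖) ^ (-(2:ℝ)) = C * (1 + |t|) ^ (-(2:ℝ))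
    rw [Real.norm_eq_abs]
  have hbound : ∀ (t θ : ℝ), |t| * ‖g (t • uVec θ)‖ ≤ ψ t := by
    intro t θ
    have h1 : (0:ℝ) < 1 + |t| := by positivity
    have h2 : ‖g (t • uVec θ)‖ ≤ C * (1 + |t|) ^ (-(3:ℝ)) := by
      simpa [norm_smul_uVec] using hC (t • uVec θ)
    calc |t| * ‖g (t • uVec θ)‖
        ≤ |t| * (C * (1 + |t|) ^ (-(3:ℝ))) := mul_le_mul_of_nonneg_left h2 (abs_nonneg t)
      _ ≤ (1 + |t|) * (C * (1 + |t|) ^ (-(3:ℝ))) := by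
          have hC0 : 0 ≤ C := by
            have := hC 0
            simp only [norm_zero, add_zero, Real.one_rpow, mul_one] at this
            exact le_trans (norm_nonneg _) this
          refine mul_le_mul_of_nonneg_right (by linarith) (by positivity)
      _ = ψ t := by
          show _ = C * (1 + |t|) ^ (-(2:ℝ))
          rw [show (-(2:ℝ)) = 1 + -(3:ℝ) by norm_num, Real.rpow_add h1, Real.rpow_one]
          ring
  have hFcont : ∀ θ : ℝ, Continuous (fun t : ℝ => (|t| : ℝ) • g (t • uVec θ)) := by
    intro θ
    exact continuous_abs.smul (hg.comp (continuous_id.smul continuous_const))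
  have hFint : ∀ θ : ℝ, Integrable (fun t : ℝ => (|t| : ℝ) • g (t • uVec θ)) := by
    intro θ
    refine hψ.mono' (hFcont θ).aestronglyMeasurable (Filter.Eventually.of_forall fun t => ?_)
    rw [norm_smul, Real.norm_eq_abs, abs_abs]
    exact hbound t θ
  set J : ℝ → ℂ := fun θ => ∫ t in Set.Ioi (0:ℝ), t • g (t • uVec θ) with hJdef
  have hJcont : Continuous J := by
    refine continuous_of_dominated (bound := ψ) ?_ ?_ hψ.restrict ?_
    · intro θ
      exact (Continuous.aestronglyMeasurable
        (continuous_id.smul (hg.comp (continuous_id.smul continuous_const))))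
    · intro θ
      refine Filter.Eventually.of_forall fun t => ?_
      rw [norm_smul, Real.norm_eq_abs]
      exact hbound t θ
    · refine Filter.Eventually.of_forall fun t => ?_
      exact (continuous_const (y := (t:ℝ))).smul (hg.comp ((continuous_const (y := (t:ℝ))).smul continuous_uVec))
  -- rewrite each inner integral
  have hsplitθ : ∀ θ : ℝ, (∫ t : ℝ, (|t| : ℝ) • g (t • uVec θ)) = J (θ - π) + J θ := by
    intro θ
    rw [← intervalIntegral.integral_Iic_add_Ioi (b := (0:ℝ)) (hFint θ).integrableOn (hFint θ).integrableOn]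
    congr 1
    · calc ∫ t in Set.Iic (0:ℝ), (|t| : ℝ) • g (t • uVec θ)
          = ∫ t in Set.Iic (0:ℝ),
              (fun s : ℝ => (|(-s)| : ℝ) • g ((-s) • uVec θ)) (-t) := by
            refine setIntegral_congr_fun measurableSet_Iic fun t _ => ?_
            beta_reduce
            rw [neg_neg]
        _ = ∫ t in Set.Ioi (-(0:ℝ)), (|(-t)| : ℝ) • g ((-t) • uVec θ) :=
            integral_comp_neg_Iic 0 (fun s : ℝ => (|(-s)| : ℝ) • g ((-s) • uVec θ))
        _ = J (θ - π) := by
            rw [neg_zero, hJdef]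
            refine setIntegral_congr_fun measurableSet_Ioi fun t ht => ?_
            rw [abs_neg, abs_of_pos ht, uVec_sub_pi, smul_neg, ← neg_smul]
    · refine setIntegral_congr_fun measurableSet_Ioi fun t ht => ?_
      rw [abs_of_pos ht]
  have hJII : ∀ a b : ℝ, IntervalIntegrable J volume a b := fun a b =>
    hJcont.intervalIntegrable a b
  have hRHS : (∫ θ in (0:ℝ)..π, ∫ t : ℝ, (|t| : ℝ) • g (t • uVec θ)) =
      ∫ θ in Set.Ioo (-π) π, J θ := by
    calc (∫ θ in (0:ℝ)..π, ∫ t : ℝ, (|t| : ℝ) • g (t • uVec θ))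
        = ∫ θ in (0:ℝ)..π, (J (θ - π) + J θ) := by
          refine intervalIntegral.integral_congr fun θ _ => hsplitθ θ
      _ = (∫ θ in (0:ℝ)..π, J (θ - π)) + ∫ θ in (0:ℝ)..π, J θ :=
          intervalIntegral.integral_add
            ((hJcont.comp (continuous_id.sub continuous_const)).intervalIntegrable 0 π)
            (hJII 0 π)
      _ = (∫ θ in (-π)..(0:ℝ), J θ) + ∫ θ in (0:ℝ)..π, J θ := by
          rw [intervalIntegral.integral_comp_sub_right J π]
          norm_num
      _ = ∫ θ in (-π)..π, J θ :=
          intervalIntegral.integral_add_adjacent_intervals (hJII (-π) 0) (hJII 0 π)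
      _ = ∫ θ in Set.Ioo (-π) π, J θ := by
          rw [intervalIntegral.integral_of_le (by linarith [Real.pi_pos]),
            integral_Ioc_eq_integral_Ioo]
  have hI : Integrable (fun p : ℝ × ℝ => p.1 • g (p.1 • uVec p.2))
      ((volume.restrict (Set.Ioi (0:ℝ))).prod (volume.restrict (Set.Ioo (-π) π))) := by
    have hone : Integrable (fun _ : ℝ => (1:ℝ)) (volume.restrict (Set.Ioo (-π) π)) := by
      exact integrableOn_const measure_Ioo_lt_top.ne
    have hbase := (hψ.restrict (s := Set.Ioi (0:ℝ))).mul_prod hone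
    refine hbase.mono' ?_ (Filter.Eventually.of_forall fun p => ?_)
    · exact Continuous.aestronglyMeasurable
        (continuous_fst.smul (hg.comp (continuous_fst.smul (continuous_uVec.comp continuous_snd))))
    · beta_reduce
      rw [norm_smul, Real.norm_eq_abs, mul_one]
      exact hbound p.1 p.2
  have hLHS : (∫ ω, g ω) = ∫ θ in Set.Ioo (-π) π, J θ := by
    calc ∫ ω, g ω
        = ∫ p : ℝ × ℝ, g (M 0 p) :=
          ((mp_M 0).integral_comp (M 0).measurableEmbedding g).symm
      _ = ∫ p in polarCoord.target, p.1 • g (M 0 (polarCoord.symm p)) :=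
          (integral_comp_polarCoord_symm (fun p => g (M 0 p))).symm
      _ = ∫ p in Set.Ioi (0:ℝ) ×ˢ Set.Ioo (-π) π, p.1 • g (p.1 • uVec p.2) := by
          rw [polarCoord_target]
          refine setIntegral_congr_fun (measurableSet_Ioi.prod measurableSet_Ioo)
            fun p _ => ?_
          rw [polarCoord_symm_apply, M_polar]
      _ = ∫ p : ℝ × ℝ, p.1 • g (p.1 • uVec p.2)
            ∂((volume.restrict (Set.Ioi (0:ℝ))).prod (volume.restrict (Set.Ioo (-π) π))) := by
          rw [Measure.prod_restrict, ← Measure.volume_eq_prod]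
      _ = ∫ θ in Set.Ioo (-π) π, ∫ r in Set.Ioi (0:ℝ), r • g (r • uVec θ) :=
          integral_prod_symm _ hI
      _ = ∫ θ in Set.Ioo (-π) π, J θ := rfl
  rw [hLHS, hRHS]

end FBP


/-- filtered backprojection for convolutions: for Schwartz functions f, η
on ℝ² and every x ∈ ℝ²,
(f ⋆ η)(x) = ∫₀^π ∫_ℝ (R_θ f)^(t) |t| η̂(t u_θ) e^{2πit⟨x,u_θ⟩} dt dθ. -/
theorem filtered_backprojection (f η : SchwartzMap (EuclideanSpace ℝ (Fin 2)) ℂ)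
    (x : EuclideanSpace ℝ (Fin 2)) :
    conv2c (fun y => f y) (fun y => η y) x = ∫ θ in (0:ℝ)..π, ∫ t : ℝ,
      𝓕 (radon (fun y => f y) θ) t * (|t| : ℝ) * 𝓕 (fun y => η y) (t • uVec θ) *
        Complex.exp (2 * (π : ℂ) * Complex.I * (t : ℂ) * ((⟪x, uVec θ⟫ : ℝ) : ℂ)) := by
  classical
  set Ff := SchwartzMap.fourierTransformCLM ℂ f with hFfdef
  set Fη := SchwartzMap.fourierTransformCLM ℂ η with hFηdef
  have hFf : (Ff : EuclideanSpace ℝ (Fin 2) → ℂ) = 𝓕 (fun y => f y) := by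
    rw [hFfdef, SchwartzMap.fourierTransformCLM_apply]
    rfl
  have hFη : (Fη : EuclideanSpace ℝ (Fin 2) → ℂ) = 𝓕 (fun y => η y) := by
    rw [hFηdef, SchwartzMap.fourierTransformCLM_apply]
    rfl
  set G : EuclideanSpace ℝ (Fin 2) → ℂ := fun ω =>
    𝓕 (fun y => f y) ω * 𝓕 (fun y => η y) ω *
      Complex.exp (↑(2 * π * ⟪x, ω⟫) * Complex.I) with hGdef
  set sf : ℝ := (2:ℝ)^(3:ℕ) *
    (Finset.Iic ((3:ℕ),(0:ℕ))).sup (fun m => SchwartzMap.seminorm ℝ m.1 m.2) Ff with hsfdef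
  set sη : ℝ := SchwartzMap.seminorm ℝ 0 0 Fη with hsηdef
  have hGcont : Continuous G := by
    rw [hGdef]
    refine Continuous.mul (Continuous.mul ?_ ?_) ?_
    · rw [← hFf]; exact Ff.continuous
    · rw [← hFη]; exact Fη.continuous
    · exact Complex.continuous_exp.comp ((Complex.continuous_ofReal.comp
        (continuous_const.mul (continuous_const.inner continuous_id))).mul continuous_const)
  have hGbound : ∀ ω, ‖G ω‖ ≤ sf * sη * (1 + ‖ω‖) ^ (-(3:ℝ)) := by
    intro ω
    have hpos : (0:ℝ) < 1 + ‖ω‖ := by positivity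
    have hpow : (1 + ‖ω‖) ^ (-(3:ℝ)) = ((1 + ‖ω‖) ^ (3:ℕ))⁻¹ := by
      rw [← Real.rpow_natCast (1 + ‖ω‖) 3, ← Real.rpow_neg hpos.le]
      norm_num
    have h1 : (1 + ‖ω‖) ^ (3:ℕ) * ‖Ff ω‖ ≤ sf := by
      have := SchwartzMap.one_add_le_sup_seminorm_apply (𝕜 := ℝ) (m := ((3:ℕ),(0:ℕ)))
        (k := 3) (n := 0) le_rfl le_rfl Ff ω
      rwa [norm_iteratedFDeriv_zero] at this
    have h1' : ‖Ff ω‖ ≤ sf * (1 + ‖ω‖) ^ (-(3:ℝ)) := by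
      rw [hpow]
      have hp3 : (0:ℝ) < (1 + ‖ω‖) ^ (3:ℕ) := by positivity
      rw [mul_comm, ← le_div_iff₀ hp3] at h1
      calc ‖Ff ω‖ ≤ sf / (1 + ‖ω‖) ^ (3:ℕ) := h1
        _ = sf * ((1 + ‖ω‖) ^ (3:ℕ))⁻¹ := by rw [div_eq_mul_inv]
    have h2 : ‖Fη ω‖ ≤ sη := SchwartzMap.norm_le_seminorm ℝ Fη ω
    have hGω : ‖G ω‖ = ‖Ff ω‖ * ‖Fη ω‖ := by
      rw [hGdef]
      beta_reduce
      rw [← hFf, ← hFη, norm_mul, norm_mul, Complex.norm_exp_ofReal_mul_I, mul_one]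
    rw [hGω]
    calc ‖Ff ω‖ * ‖Fη ω‖ ≤ ‖Ff ω‖ * sη :=
          mul_le_mul_of_nonneg_left h2 (norm_nonneg _)
      _ ≤ (sf * (1 + ‖ω‖) ^ (-(3:ℝ))) * sη :=
          mul_le_mul_of_nonneg_right h1' (apply_nonneg _ _)
      _ = sf * sη * (1 + ‖ω‖) ^ (-(3:ℝ)) := by ring
  calc conv2c (fun y => f y) (fun y => η y) x
      = ∫ ω, G ω := FBP.convA f η x
    _ = ∫ θ in (0:ℝ)..π, ∫ t : ℝ, (|t| : ℝ) • G (t • uVec θ) :=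
        FBP.polar_decomp G hGcont hGbound
    _ = ∫ θ in (0:ℝ)..π, ∫ t : ℝ,
        𝓕 (radon (fun y => f y) θ) t * (|t| : ℝ) * 𝓕 (fun y => η y) (t • uVec θ) *
          Complex.exp (2 * (π : ℂ) * Complex.I * (t : ℂ) * ((⟪x, uVec θ⟫ : ℝ) : ℂ)) := by
        refine intervalIntegral.integral_congr fun θ _ => ?_
        refine integral_congr_ae (Filter.Eventually.of_forall fun t => ?_)
        beta_reduce
        rw [FBP.slice f θ t, hGdef]
        beta_reduce
        have hinner : ⟪x, t • uVec θ⟫ = t * ⟪x, uVec θ⟫ := real_inner_smul_right x (uVec θ) t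
        rw [hinner, Complex.real_smul]
        push_cast
        ring
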